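/- arXiv:2412.17008 — 3 statements merged into one kernel-verified Lean document; each statement's English description precedes it below -/
import Mathlib

section
/- Fix k, d ∈ ℕ⁺ and C, σ > 0, and let z_1,...,z_k be i.i.d. with z_l ~ N(0, k(Cσ)²I_d). For a k×k real matrix X that is lower triangular, has nonnegative entries, and whose t-th row satisfies Σ_{l=1}^t X_{t,l} = 1 for every t ∈ [k], define z*_t := Σ_{l=1}^t X_{t,l} z_l, N(X) := Σ_{t=1}^k E[‖z*_t‖₂²], P(X) := Σ_{t=1}^k E[‖z*_t‖₂⁴], and Q(X) := Σ_{t=1}^k √(E[‖z*_t‖₂⁴]). Then the uniform-averaging matrix X* with X*_{t,l} = 1/t for l ≤ t (and 0 otherwise) minimizes each of N, P, Q over all such matrices, and moreover N(X*) ≤ d k(Cσ)²(1 + log k), P(X*) ≤ d(d+2) k²(Cσ)⁴ π²/6, and Q(X*) ≤ √(d(d+2)) · k(Cσ)²(1 + log k). -/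
open MeasureTheory ProbabilityTheory

/-- The squared Euclidean norm of the combined noise `z*_t = Σ_{l ≤ t} X_{t,l} z_l`. -/
noncomputable def sqNormCombined {Ω : Type*} {k d : ℕ} (z : Fin k → Fin d → Ω → ℝ)
    (X : Fin k → Fin k → ℝ) (t : Fin k) (ω : Ω) : ℝ :=
  ∑ i, (∑ l ∈ Finset.Iic t, X t l * z l i ω) ^ 2

/-- `N(X) = Σ_t E[‖z*_t‖₂²]`. -/
noncomputable def Nsum {Ω : Type*} [MeasurableSpace Ω] (P : Measure Ω) {k d : ℕ}
    (z : Fin k → Fin d → Ω → ℝ) (X : Fin k → Fin k → ℝ) : ℝ :=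
  ∑ t, ∫ ω, sqNormCombined z X t ω ∂P

/-- `P(X) = Σ_t E[‖z*_t‖₂⁴]`. -/
noncomputable def Psum {Ω : Type*} [MeasurableSpace Ω] (P : Measure Ω) {k d : ℕ}
    (z : Fin k → Fin d → Ω → ℝ) (X : Fin k → Fin k → ℝ) : ℝ :=
  ∑ t, ∫ ω, (sqNormCombined z X t ω) ^ 2 ∂P

/-- `Q(X) = Σ_t √(E[‖z*_t‖₂⁴])`. -/
noncomputable def Qsum {Ω : Type*} [MeasurableSpace Ω] (P : Measure Ω) {k d : ℕ}
    (z : Fin k → Fin d → Ω → ℝ) (X : Fin k → Fin k → ℝ) : ℝ :=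
  ∑ t, Real.sqrt (∫ ω, (sqNormCombined z X t ω) ^ 2 ∂P)

/-- A `k×k` matrix is admissible when it is lower triangular (P1), has nonnegative entries,
and each row `t` sums to `1` over the columns `l ≤ t` (P2, unbiasedness). -/
def AdmissibleMatrix {k : ℕ} (X : Fin k → Fin k → ℝ) : Prop :=
  (∀ t l, t < l → X t l = 0) ∧ (∀ t l, 0 ≤ X t l) ∧ (∀ t, ∑ l ∈ Finset.Iic t, X t l = 1)

/-- The uniform-averaging matrix `X*` with `X*_{t,l} = 1/t` for `l ≤ t` and `0` otherwise
(`t` is the 1-based row index). -/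
noncomputable def Xstar (k : ℕ) : Fin k → Fin k → ℝ :=
  fun t l => if l ≤ t then 1 / ((t.1 : ℝ) + 1) else 0

open MeasureTheory ProbabilityTheory Real Set
open scoped NNReal ENNReal
set_option linter.unusedSectionVars false

lemma integrable_of_comp_abs {f : ℝ → ℝ} (hf : IntegrableOn (fun x => f |x|) (Ioi 0)) :
    Integrable (fun x => f |x|) := by
  have int_Iic : IntegrableOn (fun x ↦ f |x|) (Iic 0) := by
    rw [← Measure.map_neg_eq_self (volume : Measure ℝ)]
    have m : MeasurableEmbedding fun x : ℝ => -x := (Homeomorph.neg ℝ).measurableEmbedding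
    rw [m.integrableOn_map_iff]
    simp_rw [Function.comp_def, abs_neg, neg_preimage, neg_Iic, neg_zero]
    exact (integrableOn_Ici_iff_integrableOn_Ioi).mpr hf
  have h := int_Iic.union hf
  rwa [Iic_union_Ioi, integrableOn_univ] at h

lemma integrable_pow_mul_gauss {b : ℝ} (hb : 0 < b) (n : ℕ) :
    Integrable (fun x : ℝ => x ^ n * Real.exp (-b * x ^ 2)) := by
  have key : Integrable (fun x : ℝ => |x| ^ n * Real.exp (-b * x ^ 2)) := by
    have h0 : IntegrableOn (fun x : ℝ => (fun y : ℝ => y ^ n * Real.exp (-b * y ^ 2)) |x|)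
        (Ioi 0) := by
      refine ((integrableOn_rpow_mul_exp_neg_mul_sq hb (s := n)
        (by exact neg_one_lt_zero.trans_le (Nat.cast_nonneg n))).congr_fun ?_ measurableSet_Ioi)
      intro x hx
      simp only [abs_of_pos (show (0:ℝ) < x from hx), Real.rpow_natCast]
    have h1 := integrable_of_comp_abs (f := fun y : ℝ => y ^ n * Real.exp (-b * y ^ 2)) h0
    refine h1.congr (Filter.Eventually.of_forall fun x => ?_)
    simp [sq_abs]
  refine key.mono' ?_ (Filter.Eventually.of_forall fun x => ?_)
  · exact ((measurable_id.pow_const n).mul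
      (((measurable_id.pow_const 2).const_mul (-b)).exp)).aestronglyMeasurable
  · rw [Real.norm_eq_abs, abs_mul, abs_pow, abs_of_pos (Real.exp_pos _)]

lemma integral_pow_mul_gauss_even {b : ℝ} (hb : 0 < b) (m : ℕ) :
    ∫ x : ℝ, x ^ (2 * m) * Real.exp (-b * x ^ 2) =
      b ^ (-(2 * (m : ℝ) + 1) / 2) * Real.Gamma ((2 * (m : ℝ) + 1) / 2) := by
  have h := integral_comp_abs (f := fun y : ℝ => y ^ (2 * m) * Real.exp (-b * y ^ 2))
  have heq : (fun x : ℝ => (fun y : ℝ => y ^ (2 * m) * Real.exp (-b * y ^ 2)) |x|)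
      = fun x : ℝ => x ^ (2 * m) * Real.exp (-b * x ^ 2) := by
    funext x
    simp [sq_abs, (even_two_mul m).pow_abs]
  rw [heq] at h
  rw [h]
  have h2 : ∫ x in Ioi (0:ℝ), x ^ (2 * m) * Real.exp (-b * x ^ 2)
      = b ^ (-(2 * (m:ℝ) + 1) / 2) * (1 / 2) * Real.Gamma ((2 * (m:ℝ) + 1) / 2) := by
    have h3 := integral_rpow_mul_exp_neg_mul_rpow (p := 2) (q := 2 * (m:ℝ))
      (by norm_num) (by have := Nat.cast_nonneg (α := ℝ) m; linarith) hb
    rw [show ((2 * (m:ℝ) + 1)) = (2 * (m:ℝ)) + 1 by ring]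
    rw [← h3]
    refine setIntegral_congr_fun measurableSet_Ioi fun x hx => ?_
    have hx' : (0:ℝ) < x := hx
    rw [show ((2 * (m:ℝ))) = ((2 * m : ℕ) : ℝ) by push_cast; ring, Real.rpow_natCast,
      Real.rpow_two]
  rw [h2]; ring

lemma integral_odd_mul_gauss {b : ℝ} (m : ℕ) :
    ∫ x : ℝ, x ^ (2 * m + 1) * Real.exp (-b * x ^ 2) = 0 := by
  set f := fun x : ℝ => x ^ (2 * m + 1) * Real.exp (-b * x ^ 2) with hf
  have A : MeasurableEmbedding fun x : ℝ => -x := (Homeomorph.neg ℝ).measurableEmbedding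
  have h1 : ∫ x, f (-x) = ∫ x, f x := by
    have := A.integral_map (μ := (volume : Measure ℝ)) f
    rw [Measure.map_neg_eq_self (volume : Measure ℝ)] at this
    exact this.symm
  have h2 : ∀ x, f (-x) = - f x := by
    intro x
    simp only [hf]
    rw [Odd.neg_pow ⟨m, by ring⟩, neg_sq]
    ring
  simp_rw [h2, integral_neg] at h1
  linarith

section GaussMom
variable {v : ℝ≥0}

lemma gaussianPDFReal_zero_mean (v : ℝ≥0) (x : ℝ) :
    gaussianPDFReal 0 v x = (Real.sqrt (2 * Real.pi * v))⁻¹ * Real.exp (-(2 * (v:ℝ))⁻¹ * x ^ 2) := by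
  rw [gaussianPDFReal]
  congr 1
  rw [sub_zero]
  congr 1
  ring

lemma integral_gaussianReal_eq (hv : v ≠ 0) (g : ℝ → ℝ) :
    ∫ x, g x ∂(gaussianReal 0 v) = ∫ x, gaussianPDFReal 0 v x * g x := by
  rw [gaussianReal_of_var_ne_zero 0 hv]
  have hd : (gaussianPDF 0 v) = fun x => (((gaussianPDFReal 0 v x).toNNReal : ℝ≥0) : ℝ≥0∞) := rfl
  rw [hd, integral_withDensity_eq_integral_smul
    (measurable_gaussianPDFReal 0 v).real_toNNReal g]
  congr 1
  funext x
  rw [NNReal.smul_def, smul_eq_mul, Real.coe_toNNReal _ (gaussianPDFReal_nonneg 0 v x)]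

lemma integrable_pow_gaussianReal (hv : v ≠ 0) (n : ℕ) :
    Integrable (fun x => x ^ n) (gaussianReal 0 v) := by
  have hV : (0:ℝ) < v := by exact_mod_cast pos_iff_ne_zero.mpr hv
  have hb : (0:ℝ) < (2 * (v:ℝ))⁻¹ := by positivity
  rw [gaussianReal_of_var_ne_zero 0 hv]
  have hd : (gaussianPDF 0 v) = fun x => (((gaussianPDFReal 0 v x).toNNReal : ℝ≥0) : ℝ≥0∞) := rfl
  rw [hd, integrable_withDensity_iff_integrable_smul
    (measurable_gaussianPDFReal 0 v).real_toNNReal]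
  have : (fun x => ((gaussianPDFReal 0 v x).toNNReal : ℝ≥0) • x ^ n)
      = fun x => (Real.sqrt (2 * Real.pi * v))⁻¹ * (x ^ n * Real.exp (-(2 * (v:ℝ))⁻¹ * x ^ 2)) := by
    funext x
    rw [NNReal.smul_def, smul_eq_mul, Real.coe_toNNReal _ (gaussianPDFReal_nonneg 0 v x),
      gaussianPDFReal_zero_mean]
    ring
  rw [this]
  exact (integrable_pow_mul_gauss hb n).const_mul _

lemma integral_pow_gaussianReal (hv : v ≠ 0) (n : ℕ) :
    ∫ x, x ^ n ∂(gaussianReal 0 v) = ∫ x, gaussianPDFReal 0 v x * x ^ n :=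
  integral_gaussianReal_eq hv _

lemma pdf_mul_pow_eq (v : ℝ≥0) (n : ℕ) :
    (fun x : ℝ => gaussianPDFReal 0 v x * x ^ n)
      = fun x : ℝ => (Real.sqrt (2 * Real.pi * v))⁻¹
          * (x ^ n * Real.exp (-(2 * (v:ℝ))⁻¹ * x ^ 2)) := by
  funext x
  rw [gaussianPDFReal_zero_mean]
  ring

lemma gauss_moment_odd (hv : v ≠ 0) (m : ℕ) :
    ∫ x, x ^ (2 * m + 1) ∂(gaussianReal 0 v) = 0 := by
  rw [integral_pow_gaussianReal hv, pdf_mul_pow_eq, integral_const_mul,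
    integral_odd_mul_gauss, mul_zero]

lemma gauss_moment_one (hv : v ≠ 0) : ∫ x, x ∂(gaussianReal 0 v) = 0 := by
  have h := gauss_moment_odd hv 0
  simpa using h

lemma sqrt_two_pi_v (hV : (0:ℝ) < (v:ℝ)) :
    Real.sqrt (2 * Real.pi * v) = Real.sqrt (2 * (v:ℝ)) * Real.sqrt Real.pi := by
  rw [← Real.sqrt_mul (by positivity)]
  ring_nf

lemma gauss_moment_two (hv : v ≠ 0) : ∫ x, x ^ 2 ∂(gaussianReal 0 v) = (v:ℝ) := by
  have hV : (0:ℝ) < (v:ℝ) := by exact_mod_cast pos_iff_ne_zero.mpr hv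
  have hb : (0:ℝ) < (2 * (v:ℝ))⁻¹ := by positivity
  rw [show (2:ℕ) = 2 * 1 by norm_num] at *
  rw [integral_pow_gaussianReal hv, pdf_mul_pow_eq, integral_const_mul,
    integral_pow_mul_gauss_even hb 1]
  have e1 : (-(2 * ((1:ℕ):ℝ) + 1) / 2) = (-(3/2) : ℝ) := by norm_num
  have e2 : ((2 * ((1:ℕ):ℝ) + 1) / 2) = ((3/2) : ℝ) := by norm_num
  rw [e1, e2]
  have hΓ : Real.Gamma (3/2) = Real.sqrt Real.pi / 2 := by
    rw [show (3:ℝ)/2 = 1/2 + 1 by norm_num, Real.Gamma_add_one (by norm_num),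
      Real.Gamma_one_half_eq]
    ring
  have hpow : ((2 * (v:ℝ))⁻¹) ^ (-(3/2) : ℝ) = (2 * (v:ℝ)) * Real.sqrt (2 * (v:ℝ)) := by
    rw [Real.inv_rpow (by positivity), ← Real.rpow_neg (by positivity), neg_neg,
      show ((3:ℝ)/2) = 1 + 1/2 by norm_num, Real.rpow_add (by positivity), Real.rpow_one,
      ← Real.sqrt_eq_rpow]
  rw [hΓ, hpow, sqrt_two_pi_v hV]
  have h1 : Real.sqrt (2 * (v:ℝ)) ≠ 0 := by positivity
  have h2 : Real.sqrt Real.pi ≠ 0 := by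
    have := Real.pi_pos; positivity
  field_simp

lemma gauss_moment_four (hv : v ≠ 0) : ∫ x, x ^ 4 ∂(gaussianReal 0 v) = 3 * (v:ℝ) ^ 2 := by
  have hV : (0:ℝ) < (v:ℝ) := by exact_mod_cast pos_iff_ne_zero.mpr hv
  have hb : (0:ℝ) < (2 * (v:ℝ))⁻¹ := by positivity
  rw [show (4:ℕ) = 2 * 2 by norm_num] at *
  rw [integral_pow_gaussianReal hv, pdf_mul_pow_eq, integral_const_mul,
    integral_pow_mul_gauss_even hb 2]
  have e1 : (-(2 * ((2:ℕ):ℝ) + 1) / 2) = (-(5/2) : ℝ) := by norm_num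
  have e2 : ((2 * ((2:ℕ):ℝ) + 1) / 2) = ((5/2) : ℝ) := by norm_num
  rw [e1, e2]
  have hΓ3 : Real.Gamma (3/2) = Real.sqrt Real.pi / 2 := by
    rw [show (3:ℝ)/2 = 1/2 + 1 by norm_num, Real.Gamma_add_one (by norm_num),
      Real.Gamma_one_half_eq]
    ring
  have hΓ : Real.Gamma (5/2) = 3 * Real.sqrt Real.pi / 4 := by
    rw [show (5:ℝ)/2 = 3/2 + 1 by norm_num, Real.Gamma_add_one (by norm_num), hΓ3]
    ring
  have hpow : ((2 * (v:ℝ))⁻¹) ^ (-(5/2) : ℝ)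
      = (2 * (v:ℝ)) ^ 2 * Real.sqrt (2 * (v:ℝ)) := by
    rw [Real.inv_rpow (by positivity), ← Real.rpow_neg (by positivity), neg_neg,
      show ((5:ℝ)/2) = 2 + 1/2 by norm_num, Real.rpow_add (by positivity),
      ← Real.sqrt_eq_rpow, Real.rpow_two]
  rw [hΓ, hpow, sqrt_two_pi_v hV]
  have h1 : Real.sqrt (2 * (v:ℝ)) ≠ 0 := by positivity
  have h2 : Real.sqrt Real.pi ≠ 0 := by
    have := Real.pi_pos; positivity
  field_simp
  ring

end GaussMom

section OmegaSide

variable {Ω : Type*} [MeasurableSpace Ω] (P : Measure Ω) [IsProbabilityMeasure P]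
  {k d : ℕ} {v : ℝ≥0} (z : Fin k → Fin d → Ω → ℝ)
  (hmeas : ∀ l i, Measurable (z l i))
  (hv : v ≠ 0)
  (hlaw : ∀ l i, Measure.map (z l i) P = gaussianReal 0 v)
  (hindep : iIndepFun
      (fun (q : Fin k × Fin d) ω => z q.1 q.2 ω) P)

include hmeas hlaw hv in
lemma z_pow_integrable (l : Fin k) (i : Fin d) (n : ℕ) :
    Integrable (fun ω => z l i ω ^ n) P := by
  have h := integrable_pow_gaussianReal hv n
  rw [← hlaw l i, integrable_map_measure
    (show Measurable fun x : ℝ => x ^ n by fun_prop).aestronglyMeasurable (hmeas l i).aemeasurable] at h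
  exact h

include hmeas hlaw in
lemma z_pow_integral (l : Fin k) (i : Fin d) (n : ℕ) :
    ∫ ω, z l i ω ^ n ∂P = ∫ x, x ^ n ∂(gaussianReal 0 v) := by
  rw [← hlaw l i, integral_map (hmeas l i).aemeasurable
    (show Measurable fun x : ℝ => x ^ n by fun_prop).aestronglyMeasurable]

include hmeas hindep in
lemma indep_lincomb (S T : Finset (Fin k × Fin d)) (hST : Disjoint S T)
    (φ ψ : Fin k × Fin d → ℝ) :
    IndepFun (fun ω => ∑ q ∈ S, φ q * z q.1 q.2 ω)
      (fun ω => ∑ q ∈ T, ψ q * z q.1 q.2 ω) P := by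
  have h := hindep.indepFun_finset S T hST (fun q => hmeas q.1 q.2)
  have hgS : Measurable (fun w : S → ℝ => ∑ q : S, φ q * w q) := by
    apply Finset.measurable_sum
    intro q _
    exact (measurable_pi_apply q).const_mul _
  have hgT : Measurable (fun w : T → ℝ => ∑ q : T, ψ q * w q) := by
    apply Finset.measurable_sum
    intro q _
    exact (measurable_pi_apply q).const_mul _
  have h2 := h.comp hgS hgT
  refine h2.congr ?_ ?_
  · exact Filter.Eventually.of_forall fun ω => by
      simpa only [Function.comp_apply] using
        Finset.sum_coe_sort S (fun q => φ q * z q.1 q.2 ω)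
  · exact Filter.Eventually.of_forall fun ω => by
      simpa only [Function.comp_apply] using
        Finset.sum_coe_sort T (fun q => ψ q * z q.1 q.2 ω)


include hmeas hlaw hv in
lemma zint1 (l : Fin k) (i : Fin d) : ∫ ω, z l i ω ∂P = 0 := by
  have h := z_pow_integral P z hmeas hlaw l i 1
  simpa [gauss_moment_one hv] using h

include hmeas hlaw hv in
lemma zint2 (l : Fin k) (i : Fin d) : ∫ ω, z l i ω ^ 2 ∂P = (v:ℝ) := by
  rw [z_pow_integral P z hmeas hlaw l i 2, gauss_moment_two hv]

include hmeas hlaw hv in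
lemma zint3 (l : Fin k) (i : Fin d) : ∫ ω, z l i ω ^ 3 ∂P = 0 := by
  have h := gauss_moment_odd hv 1
  rw [z_pow_integral P z hmeas hlaw l i 3]
  simpa using h

include hmeas hlaw hv in
lemma zint4 (l : Fin k) (i : Fin d) : ∫ ω, z l i ω ^ 4 ∂P = 3 * (v:ℝ) ^ 2 := by
  rw [z_pow_integral P z hmeas hlaw l i 4, gauss_moment_four hv]

include hmeas hindep in
lemma indep_single_sum (a : Fin k → ℝ) (i : Fin d) (l : Fin k) (s : Finset (Fin k))
    (hl : l ∉ s) :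
    IndepFun (fun ω => a l * z l i ω) (fun ω => ∑ m ∈ s, a m * z m i ω) P := by
  have hST : Disjoint ({((l, i) : Fin k × Fin d)} : Finset (Fin k × Fin d))
      (s.image (fun m => (m, i))) := by
    rw [Finset.disjoint_left]
    rintro q hq hq2
    rw [Finset.mem_singleton] at hq
    subst hq
    obtain ⟨m, hm, hmq⟩ := Finset.mem_image.mp hq2
    obtain ⟨rfl, -⟩ := Prod.mk.injEq .. ▸ hmq
    · exact hl hm
  have h := indep_lincomb P z hmeas hindep _ _ hST (fun q => a q.1) (fun q => a q.1)
  have e1 : (fun ω => ∑ q ∈ ({((l, i) : Fin k × Fin d)} : Finset (Fin k × Fin d)),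
      a q.1 * z q.1 q.2 ω) = fun ω => a l * z l i ω := by
    funext ω; simp
  have e2 : (fun ω => ∑ q ∈ s.image (fun m => (m, i)), a q.1 * z q.1 q.2 ω)
      = fun ω => ∑ m ∈ s, a m * z m i ω := by
    funext ω
    rw [Finset.sum_image]
    intro m _ m' _ h
    exact (Prod.mk.injEq .. ▸ h).1
  rw [e1, e2] at h
  exact h

include hmeas hindep in
lemma indep_coord (a b : Fin k → ℝ) (s0 s1 : Finset (Fin k)) (i j : Fin d) (hij : i ≠ j) :
    IndepFun (fun ω => ∑ m ∈ s0, a m * z m i ω) (fun ω => ∑ m ∈ s1, b m * z m j ω) P := by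
  have hST : Disjoint (s0.image (fun m => (m, i)))
      (s1.image (fun m => (m, j))) := by
    rw [Finset.disjoint_left]
    rintro q hq hq2
    obtain ⟨m, -, rfl⟩ := Finset.mem_image.mp hq
    obtain ⟨m', -, hmq⟩ := Finset.mem_image.mp hq2
    exact hij ((Prod.mk.injEq .. ▸ hmq).2.symm ▸ rfl)
  have h := indep_lincomb P z hmeas hindep _ _ hST (fun q => a q.1) (fun q => b q.1)
  have e1 : (fun ω => ∑ q ∈ s0.image (fun m => (m, i)),
      a q.1 * z q.1 q.2 ω) = fun ω => ∑ m ∈ s0, a m * z m i ω := by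
    funext ω
    rw [Finset.sum_image]
    intro m _ m' _ h
    exact (Prod.mk.injEq .. ▸ h).1
  have e2 : (fun ω => ∑ q ∈ s1.image (fun m => (m, j)),
      b q.1 * z q.1 q.2 ω) = fun ω => ∑ m ∈ s1, b m * z m j ω := by
    funext ω
    rw [Finset.sum_image]
    intro m _ m' _ h
    exact (Prod.mk.injEq .. ▸ h).1
  rw [e1, e2] at h
  exact h

include hmeas hlaw hv hindep in
lemma Wmoments (a : Fin k → ℝ) (i : Fin d) (s : Finset (Fin k)) :
    (Integrable (fun ω => (∑ l ∈ s, a l * z l i ω) ^ 1) P ∧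
     Integrable (fun ω => (∑ l ∈ s, a l * z l i ω) ^ 2) P ∧
     Integrable (fun ω => (∑ l ∈ s, a l * z l i ω) ^ 3) P ∧
     Integrable (fun ω => (∑ l ∈ s, a l * z l i ω) ^ 4) P) ∧
    (∫ ω, (∑ l ∈ s, a l * z l i ω) ^ 1 ∂P = 0 ∧
     ∫ ω, (∑ l ∈ s, a l * z l i ω) ^ 2 ∂P = (v:ℝ) * ∑ l ∈ s, a l ^ 2 ∧
     ∫ ω, (∑ l ∈ s, a l * z l i ω) ^ 3 ∂P = 0 ∧
     ∫ ω, (∑ l ∈ s, a l * z l i ω) ^ 4 ∂P = 3 * ((v:ℝ) * ∑ l ∈ s, a l ^ 2) ^ 2) := by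
  classical
  induction s using Finset.induction_on with
  | empty =>
      refine ⟨⟨?_, ?_, ?_, ?_⟩, by simp, by simp, by simp, by simp⟩ <;>
        · simp only [Finset.sum_empty]
          simpa using (integrable_const (0:ℝ) (μ := P))
  | @insert l s hl ih =>
      obtain ⟨⟨ihW1, ihW2, ihW3, ihW4⟩, ihw1, ihw2, ihw3, ihw4⟩ := ih
      set A : Ω → ℝ := fun ω => a l * z l i ω with hA
      set W : Ω → ℝ := fun ω => ∑ m ∈ s, a m * z m i ω with hW
      have hsum : ∀ ω, ∑ m ∈ insert l s, a m * z m i ω = A ω + W ω := by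
        intro ω; rw [Finset.sum_insert hl]
      have intA : ∀ n : ℕ, Integrable (fun ω => A ω ^ n) P := by
        intro n
        have : (fun ω => A ω ^ n) = fun ω => a l ^ n * z l i ω ^ n := by
          funext ω; rw [hA]; ring
        rw [this]
        exact (z_pow_integrable P z hmeas hv hlaw l i n).const_mul _
      have iA1 : ∫ ω, A ω ^ 1 ∂P = 0 := by
        simp only [hA, pow_one]
        rw [integral_const_mul, zint1 P z hmeas hv hlaw l i, mul_zero]
      have iA2 : ∫ ω, A ω ^ 2 ∂P = a l ^ 2 * (v:ℝ) := by
        have e : (fun ω => A ω ^ 2) = fun ω => a l ^ 2 * z l i ω ^ 2 := by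
          funext ω; rw [hA]; ring
        rw [e, integral_const_mul, zint2 P z hmeas hv hlaw l i]
      have iA3 : ∫ ω, A ω ^ 3 ∂P = 0 := by
        have e : (fun ω => A ω ^ 3) = fun ω => a l ^ 3 * z l i ω ^ 3 := by
          funext ω; rw [hA]; ring
        rw [e, integral_const_mul, zint3 P z hmeas hv hlaw l i, mul_zero]
      have iA4 : ∫ ω, A ω ^ 4 ∂P = a l ^ 4 * (3 * (v:ℝ) ^ 2) := by
        have e : (fun ω => A ω ^ 4) = fun ω => a l ^ 4 * z l i ω ^ 4 := by
          funext ω; rw [hA]; ring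
        rw [e, integral_const_mul, zint4 P z hmeas hv hlaw l i]
      have hI : IndepFun A W P := indep_single_sum P z hmeas hindep a i l s hl
      have hImn : ∀ m n : ℕ, IndepFun (fun ω => A ω ^ m) (fun ω => W ω ^ n) P := by
        intro m n
        exact hI.comp (show Measurable fun x : ℝ => x ^ m by fun_prop)
          (show Measurable fun x : ℝ => x ^ n by fun_prop)
      have intW : ∀ n ∈ ({1,2,3,4} : Finset ℕ), Integrable (fun ω => W ω ^ n) P := by
        intro n hn
        fin_cases hn <;> assumption
      have intAW : ∀ m : ℕ, ∀ n ∈ ({1,2,3,4} : Finset ℕ),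
          Integrable (fun ω => A ω ^ m * W ω ^ n) P :=
        fun m n hn => (hImn m n).integrable_mul (intA m) (intW n hn)
      have iAW : ∀ m : ℕ, ∀ n ∈ ({1,2,3,4} : Finset ℕ),
          ∫ ω, A ω ^ m * W ω ^ n ∂P = (∫ ω, A ω ^ m ∂P) * ∫ ω, W ω ^ n ∂P :=
        fun m n hn => (hImn m n).integral_mul_eq_mul_integral (intA m).aestronglyMeasurable (intW n hn).aestronglyMeasurable
      have e2 : (fun ω => (A ω + W ω) ^ 2)
          = fun ω => A ω ^ 2 + (2 * (A ω ^ 1 * W ω ^ 1) + W ω ^ 2) := by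
        funext ω; ring
      have e3 : (fun ω => (A ω + W ω) ^ 3)
          = fun ω => A ω ^ 3 + (3 * (A ω ^ 2 * W ω ^ 1)
              + (3 * (A ω ^ 1 * W ω ^ 2) + W ω ^ 3)) := by
        funext ω; ring
      have e4 : (fun ω => (A ω + W ω) ^ 4)
          = fun ω => A ω ^ 4 + (4 * (A ω ^ 3 * W ω ^ 1)
              + (6 * (A ω ^ 2 * W ω ^ 2) + (4 * (A ω ^ 1 * W ω ^ 3) + W ω ^ 4))) := by
        funext ω; ring
      have m1 : (1:ℕ) ∈ ({1,2,3,4} : Finset ℕ) := by decide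
      have m2 : (2:ℕ) ∈ ({1,2,3,4} : Finset ℕ) := by decide
      have m3 : (3:ℕ) ∈ ({1,2,3,4} : Finset ℕ) := by decide
      have m4 : (4:ℕ) ∈ ({1,2,3,4} : Finset ℕ) := by decide
      have int2 : Integrable (fun ω => (A ω + W ω) ^ 2) P := by
        rw [e2]
        exact (intA 2).add (((intAW 1 1 m1).const_mul 2).add (intW 2 m2))
      have int3 : Integrable (fun ω => (A ω + W ω) ^ 3) P := by
        rw [e3]
        exact (intA 3).add (((intAW 2 1 m1).const_mul 3).add
          (((intAW 1 2 m2).const_mul 3).add (intW 3 m3)))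
      have int4 : Integrable (fun ω => (A ω + W ω) ^ 4) P := by
        rw [e4]
        exact (intA 4).add (((intAW 3 1 m1).const_mul 4).add
          (((intAW 2 2 m2).const_mul 6).add
            (((intAW 1 3 m3).const_mul 4).add (intW 4 m4))))
      have int1 : Integrable (fun ω => (A ω + W ω) ^ 1) P := by
        simp only [pow_one]
        exact ((intA 1).congr (Filter.Eventually.of_forall fun ω => by simp)).add
          ((intW 1 m1).congr (Filter.Eventually.of_forall fun ω => by simp))
      have sums2 : ∑ m ∈ insert l s, a m ^ 2 = a l ^ 2 + ∑ m ∈ s, a m ^ 2 :=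
        Finset.sum_insert hl
      have i1 : ∫ ω, (A ω + W ω) ^ 1 ∂P = 0 := by
        simp only [pow_one]
        rw [integral_add ((intA 1).congr (Filter.Eventually.of_forall fun ω => by simp))
          ((intW 1 m1).congr (Filter.Eventually.of_forall fun ω => by simp))]
        have := iA1; have := ihw1
        simp only [pow_one] at this ihw1 iA1 ⊢
        rw [iA1, ihw1]; norm_num
      have g21 : Integrable (fun ω => 2 * (A ω ^ 1 * W ω ^ 1)) P := (intAW 1 1 m1).const_mul 2
      have g22 : Integrable (fun ω => 2 * (A ω ^ 1 * W ω ^ 1) + W ω ^ 2) P :=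
        g21.add (intW 2 m2)
      have i2 : ∫ ω, (A ω + W ω) ^ 2 ∂P = (v:ℝ) * ∑ m ∈ insert l s, a m ^ 2 := by
        rw [e2, integral_add (intA 2) g22, integral_add g21 (intW 2 m2),
          integral_const_mul, iAW 1 1 m1, iA1, iA2, ihw1, ihw2, sums2]
        ring
      have g31 : Integrable (fun ω => 3 * (A ω ^ 2 * W ω ^ 1)) P := (intAW 2 1 m1).const_mul 3
      have g32 : Integrable (fun ω => 3 * (A ω ^ 1 * W ω ^ 2)) P := (intAW 1 2 m2).const_mul 3
      have g33 : Integrable (fun ω => 3 * (A ω ^ 1 * W ω ^ 2) + W ω ^ 3) P :=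
        g32.add (intW 3 m3)
      have g34 : Integrable
          (fun ω => 3 * (A ω ^ 2 * W ω ^ 1) + (3 * (A ω ^ 1 * W ω ^ 2) + W ω ^ 3)) P :=
        g31.add g33
      have i3 : ∫ ω, (A ω + W ω) ^ 3 ∂P = 0 := by
        rw [e3, integral_add (intA 3) g34, integral_add g31 g33,
          integral_add g32 (intW 3 m3),
          integral_const_mul, integral_const_mul, iAW 2 1 m1, iAW 1 2 m2,
          iA1, iA3, ihw1, ihw3]
        ring
      have g41 : Integrable (fun ω => 4 * (A ω ^ 3 * W ω ^ 1)) P := (intAW 3 1 m1).const_mul 4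
      have g42 : Integrable (fun ω => 6 * (A ω ^ 2 * W ω ^ 2)) P := (intAW 2 2 m2).const_mul 6
      have g43 : Integrable (fun ω => 4 * (A ω ^ 1 * W ω ^ 3)) P := (intAW 1 3 m3).const_mul 4
      have g44 : Integrable (fun ω => 4 * (A ω ^ 1 * W ω ^ 3) + W ω ^ 4) P :=
        g43.add (intW 4 m4)
      have g45 : Integrable
          (fun ω => 6 * (A ω ^ 2 * W ω ^ 2) + (4 * (A ω ^ 1 * W ω ^ 3) + W ω ^ 4)) P :=
        g42.add g44
      have g46 : Integrable (fun ω => 4 * (A ω ^ 3 * W ω ^ 1)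
          + (6 * (A ω ^ 2 * W ω ^ 2) + (4 * (A ω ^ 1 * W ω ^ 3) + W ω ^ 4))) P :=
        g41.add g45
      have i4 : ∫ ω, (A ω + W ω) ^ 4 ∂P
          = 3 * ((v:ℝ) * ∑ m ∈ insert l s, a m ^ 2) ^ 2 := by
        rw [e4, integral_add (intA 4) g46, integral_add g41 g45,
          integral_add g42 g44, integral_add g43 (intW 4 m4),
          integral_const_mul, integral_const_mul, integral_const_mul,
          iAW 3 1 m1, iAW 2 2 m2, iAW 1 3 m3,
          iA1, iA2, iA3, iA4, ihw1, ihw2, ihw3, ihw4, sums2]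
        ring
      have hfun : ∀ n : ℕ, (fun ω => (∑ m ∈ insert l s, a m * z m i ω) ^ n)
          = fun ω => (A ω + W ω) ^ n := by
        intro n; funext ω; rw [hsum ω]
      refine ⟨⟨?_, ?_, ?_, ?_⟩, ?_, ?_, ?_, ?_⟩
      · rw [hfun 1]; exact int1
      · rw [hfun 2]; exact int2
      · rw [hfun 3]; exact int3
      · rw [hfun 4]; exact int4
      · rw [hfun 1]; exact i1
      · rw [hfun 2]; exact i2
      · rw [hfun 3]; exact i3
      · rw [hfun 4]; exact i4

include hmeas hlaw hv hindep in
lemma sq_moments (a : Fin k → ℝ) (s0 : Finset (Fin k)) :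
    Integrable (fun ω => ∑ i, (∑ l ∈ s0, a l * z l i ω) ^ 2) P ∧
    Integrable (fun ω => (∑ i, (∑ l ∈ s0, a l * z l i ω) ^ 2) ^ 2) P ∧
    ∫ ω, (∑ i, (∑ l ∈ s0, a l * z l i ω) ^ 2) ∂P
      = d * ((v:ℝ) * ∑ l ∈ s0, a l ^ 2) ∧
    ∫ ω, (∑ i, (∑ l ∈ s0, a l * z l i ω) ^ 2) ^ 2 ∂P
      = d * (d + 2) * ((v:ℝ) * ∑ l ∈ s0, a l ^ 2) ^ 2 := by
  classical
  set Y : Fin d → Ω → ℝ := fun i ω => ∑ l ∈ s0, a l * z l i ω with hY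
  set S : ℝ := ∑ l ∈ s0, a l ^ 2 with hS
  have hW := fun i => Wmoments P z hmeas hv hlaw hindep a i s0
  have intY2 : ∀ i : Fin d, Integrable (fun ω => Y i ω ^ 2) P := fun i => (hW i).1.2.1
  have intY4 : ∀ i : Fin d, Integrable (fun ω => Y i ω ^ 4) P := fun i => (hW i).1.2.2.2
  have iY2 : ∀ i : Fin d, ∫ ω, Y i ω ^ 2 ∂P = (v:ℝ) * S := fun i => (hW i).2.2.1
  have iY4 : ∀ i : Fin d, ∫ ω, Y i ω ^ 4 ∂P = 3 * ((v:ℝ) * S) ^ 2 := fun i => (hW i).2.2.2.2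
  have intQ : Integrable (fun ω => ∑ i, Y i ω ^ 2) P := integrable_finset_sum _ fun i _ => intY2 i
  have iQ : ∫ ω, (∑ i, Y i ω ^ 2) ∂P = d * ((v:ℝ) * S) := by
    rw [integral_finset_sum _ fun i _ => intY2 i]
    simp only [iY2]
    rw [Finset.sum_const, Finset.card_univ, Fintype.card_fin, nsmul_eq_mul]
  have intProd : ∀ i j : Fin d, Integrable (fun ω => Y i ω ^ 2 * Y j ω ^ 2) P := by
    intro i j
    by_cases hij : i = j
    · subst hij
      exact (intY4 i).congr (Filter.Eventually.of_forall fun ω => by ring)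
    · have hI : IndepFun (Y i) (Y j) P := indep_coord P z hmeas hindep a a s0 s0 i j hij
      have hI2 : IndepFun (fun ω => Y i ω ^ 2) (fun ω => Y j ω ^ 2) P :=
        hI.comp (show Measurable fun x : ℝ => x ^ 2 by fun_prop)
          (show Measurable fun x : ℝ => x ^ 2 by fun_prop)
      exact hI2.integrable_mul (intY2 i) (intY2 j)
  have iProd : ∀ i j : Fin d, ∫ ω, Y i ω ^ 2 * Y j ω ^ 2 ∂P
      = ((v:ℝ) * S) ^ 2 + if i = j then 2 * ((v:ℝ) * S) ^ 2 else 0 := by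
    intro i j
    by_cases hij : i = j
    · subst hij
      rw [if_pos rfl]
      have e : (fun ω => Y i ω ^ 2 * Y i ω ^ 2) = fun ω => Y i ω ^ 4 := by
        funext ω; ring
      rw [e, iY4 i]; ring
    · rw [if_neg hij]
      have hI : IndepFun (Y i) (Y j) P := indep_coord P z hmeas hindep a a s0 s0 i j hij
      have hI2 : IndepFun (fun ω => Y i ω ^ 2) (fun ω => Y j ω ^ 2) P :=
        hI.comp (show Measurable fun x : ℝ => x ^ 2 by fun_prop)
          (show Measurable fun x : ℝ => x ^ 2 by fun_prop)
      have hmul : ∫ ω, Y i ω ^ 2 * Y j ω ^ 2 ∂P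
          = (∫ ω, Y i ω ^ 2 ∂P) * ∫ ω, Y j ω ^ 2 ∂P :=
        hI2.integral_mul_eq_mul_integral (intY2 i).aestronglyMeasurable (intY2 j).aestronglyMeasurable
      rw [hmul, iY2 i, iY2 j]
      ring
  have expand : (fun ω => (∑ i, Y i ω ^ 2) ^ 2)
      = fun ω => ∑ i, ∑ j, Y i ω ^ 2 * Y j ω ^ 2 := by
    funext ω
    rw [sq, Finset.sum_mul_sum]
  have intQ2 : Integrable (fun ω => (∑ i, Y i ω ^ 2) ^ 2) P := by
    rw [expand]
    exact integrable_finset_sum _ fun i _ => integrable_finset_sum _ fun j _ => intProd i j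
  have iQ2 : ∫ ω, (∑ i, Y i ω ^ 2) ^ 2 ∂P = d * (d + 2) * ((v:ℝ) * S) ^ 2 := by
    rw [expand, integral_finset_sum _ fun i _ =>
      integrable_finset_sum _ fun j _ => intProd i j]
    have : ∀ i : Fin d, ∫ ω, (∑ j, Y i ω ^ 2 * Y j ω ^ 2) ∂P
        = (d + 2) * ((v:ℝ) * S) ^ 2 := by
      intro i
      rw [integral_finset_sum _ fun j _ => intProd i j]
      simp only [iProd]
      rw [Finset.sum_add_distrib, Finset.sum_const, Finset.card_univ, Fintype.card_fin,
        Finset.sum_ite_eq, if_pos (Finset.mem_univ i), nsmul_eq_mul]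
      ring
    simp only [this]
    rw [Finset.sum_const, Finset.card_univ, Fintype.card_fin, nsmul_eq_mul]
    ring
  exact ⟨intQ, intQ2, iQ, iQ2⟩

end OmegaSide


/-- For i.i.d. `z_l ~ N(0, k(Cσ)² I_d)`, the uniform-averaging matrix `X*`
minimizes each of `N`, `P`, `Q` over all lower-triangular nonnegative matrices with unit row
sums, and `N(X*) ≤ dk(Cσ)²(1 + log k)`, `P(X*) ≤ d(d+2)k²(Cσ)⁴π²/6`, and
`Q(X*) ≤ √(d(d+2))·k(Cσ)²(1 + log k)`. -/
theorem stmt_11 {Ω : Type*} [MeasurableSpace Ω] (P : Measure Ω) [IsProbabilityMeasure P]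
    (k d : ℕ) (hk : 0 < k) (hd : 0 < d) (C σ : ℝ) (hC : 0 < C) (hσ : 0 < σ)
    (z : Fin k → Fin d → Ω → ℝ)
    (hmeas : ∀ l i, Measurable (z l i))
    (hlaw : ∀ l i, Measure.map (z l i) P = gaussianReal 0 (((k : ℝ) * (C * σ) ^ 2).toNNReal))
    (hindep : iIndepFun
      (fun (q : Fin k × Fin d) ω => z q.1 q.2 ω) P) :
    (∀ X : Fin k → Fin k → ℝ, AdmissibleMatrix X →
      Nsum P z (Xstar k) ≤ Nsum P z X ∧ Psum P z (Xstar k) ≤ Psum P z X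
        ∧ Qsum P z (Xstar k) ≤ Qsum P z X) ∧
    Nsum P z (Xstar k) ≤ d * k * (C * σ) ^ 2 * (1 + Real.log k) ∧
    Psum P z (Xstar k) ≤ d * (d + 2) * (k : ℝ) ^ 2 * (C * σ) ^ 4 * Real.pi ^ 2 / 6 ∧
    Qsum P z (Xstar k) ≤ Real.sqrt (d * (d + 2)) * k * (C * σ) ^ 2 * (1 + Real.log k) := by
  classical
  set v : ℝ≥0 := ((k : ℝ) * (C * σ) ^ 2).toNNReal with hvdef
  have hVpos : (0:ℝ) < (k : ℝ) * (C * σ) ^ 2 := by positivity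
  have hv : v ≠ 0 := by
    rw [hvdef]
    exact (Real.toNNReal_pos.mpr hVpos).ne'
  have hVcoe : ((v:ℝ)) = (k : ℝ) * (C * σ) ^ 2 := Real.coe_toNNReal _ hVpos.le
  have hVnn : (0:ℝ) ≤ (v:ℝ) := v.coe_nonneg
  -- row sums of squares
  set S : (Fin k → Fin k → ℝ) → Fin k → ℝ :=
    fun X t => ∑ l ∈ Finset.Iic t, (X t l) ^ 2 with hSdef
  have hSnn : ∀ X t, 0 ≤ S X t := fun X t => Finset.sum_nonneg fun l _ => sq_nonneg _
  have hmom := fun (X : Fin k → Fin k → ℝ) (t : Fin k) =>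
    sq_moments P z hmeas hv hlaw hindep (X t) (Finset.Iic t)
  have hN : ∀ X : Fin k → Fin k → ℝ, Nsum P z X = ∑ t, (d : ℝ) * ((v:ℝ) * S X t) := by
    intro X
    unfold Nsum sqNormCombined
    exact Finset.sum_congr rfl fun t _ => (hmom X t).2.2.1
  have hP : ∀ X : Fin k → Fin k → ℝ,
      Psum P z X = ∑ t, (d : ℝ) * (d + 2) * ((v:ℝ) * S X t) ^ 2 := by
    intro X
    unfold Psum sqNormCombined
    exact Finset.sum_congr rfl fun t _ => (hmom X t).2.2.2
  have hQ : ∀ X : Fin k → Fin k → ℝ,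
      Qsum P z X = ∑ t, Real.sqrt ((d:ℝ) * (d + 2)) * ((v:ℝ) * S X t) := by
    intro X
    unfold Qsum sqNormCombined
    refine Finset.sum_congr rfl fun t _ => ?_
    rw [(hmom X t).2.2.2, Real.sqrt_mul (by positivity), Real.sqrt_sq (by positivity)]
  -- value of S at Xstar
  have hSstar : ∀ t : Fin k, S (Xstar k) t = 1 / ((t.1 : ℝ) + 1) := by
    intro t
    show ∑ l ∈ Finset.Iic t, (Xstar k t l) ^ 2 = 1 / ((t.1 : ℝ) + 1)
    have : ∀ l ∈ Finset.Iic t, (Xstar k t l) ^ 2 = (1 / ((t.1 : ℝ) + 1)) ^ 2 := by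
      intro l hl
      rw [Xstar, if_pos (Finset.mem_Iic.mp hl)]
    rw [Finset.sum_congr rfl this, Finset.sum_const, Fin.card_Iic, nsmul_eq_mul]
    have ht : ((t.1 : ℝ) + 1) ≠ 0 := by positivity
    push_cast
    field_simp
  -- minimality
  have hmin : ∀ X : Fin k → Fin k → ℝ, AdmissibleMatrix X → ∀ t : Fin k,
      S (Xstar k) t ≤ S X t := by
    intro X hX t
    rw [hSstar t]
    have h1 : (∑ l ∈ Finset.Iic t, X t l) ^ 2 ≤ (Finset.Iic t).card * S X t := by
      exact_mod_cast sq_sum_le_card_mul_sum_sq (s := Finset.Iic t) (f := X t)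
    rw [hX.2.2 t, one_pow, Fin.card_Iic] at h1
    rw [div_le_iff₀ (by positivity)]
    calc (1:ℝ) ≤ (t.1 + 1 : ℕ) * S X t := by exact_mod_cast h1
    _ = S X t * ((t.1:ℝ) + 1) := by push_cast; ring
  -- harmonic bound
  have hharm : ∑ t : Fin k, 1 / ((t.1 : ℝ) + 1) ≤ 1 + Real.log k := by
    have e : ∑ t : Fin k, 1 / ((t.1 : ℝ) + 1) = (harmonic k : ℝ) := by
      rw [Fin.sum_univ_eq_sum_range (fun i => 1 / ((i : ℝ) + 1)), harmonic]
      push_cast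
      exact Finset.sum_congr rfl fun i _ => by rw [one_div]
    rw [e]
    exact_mod_cast harmonic_le_one_add_log k
  -- basel bound
  have hbasel : ∑ t : Fin k, (1 / ((t.1 : ℝ) + 1)) ^ 2 ≤ Real.pi ^ 2 / 6 := by
    have e : ∑ t : Fin k, (1 / ((t.1 : ℝ) + 1)) ^ 2
        = ∑ i ∈ Finset.range k, (fun n : ℕ => (1:ℝ) / (n:ℝ) ^ 2) (i + 1) := by
      rw [Fin.sum_univ_eq_sum_range (fun i => (1 / ((i : ℝ) + 1)) ^ 2)]
      refine Finset.sum_congr rfl fun i _ => ?_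
      push_cast
      rw [div_pow, one_pow]
    rw [e]
    have e2 : ∑ i ∈ Finset.range k, (fun n : ℕ => (1:ℝ) / (n:ℝ) ^ 2) (i + 1)
        = ∑ i ∈ Finset.range (k+1), (1:ℝ) / (i:ℝ) ^ 2 := by
      rw [Finset.sum_range_succ' (fun n : ℕ => (1:ℝ) / (n:ℝ) ^ 2) k]
      norm_num
    rw [e2]
    have hsum := hasSum_zeta_two
    calc ∑ i ∈ Finset.range (k+1), (1:ℝ) / (i:ℝ) ^ 2
        ≤ ∑' n : ℕ, (1:ℝ) / (n:ℝ) ^ 2 :=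
          Summable.sum_le_tsum _ (fun i _ => by positivity) hsum.summable
    _ = Real.pi ^ 2 / 6 := hsum.tsum_eq
  refine ⟨?_, ?_, ?_, ?_⟩
  · intro X hX
    refine ⟨?_, ?_, ?_⟩
    · rw [hN, hN]
      refine Finset.sum_le_sum fun t _ => ?_
      have := hmin X hX t
      gcongr
    · rw [hP, hP]
      refine Finset.sum_le_sum fun t _ => ?_
      have h1 := hmin X hX t
      exact mul_le_mul_of_nonneg_left
        (pow_le_pow_left₀ (by positivity) (mul_le_mul_of_nonneg_left h1 hVnn) 2)
        (by positivity)
    · rw [hQ, hQ]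
      refine Finset.sum_le_sum fun t _ => ?_
      have := hmin X hX t
      gcongr
  · rw [hN]
    have e : ∑ t, (d : ℝ) * ((v:ℝ) * S (Xstar k) t)
        = (d : ℝ) * (v:ℝ) * ∑ t : Fin k, 1 / ((t.1 : ℝ) + 1) := by
      rw [Finset.mul_sum]
      exact Finset.sum_congr rfl fun t _ => by rw [hSstar t]; ring
    rw [e, hVcoe]
    calc (d : ℝ) * ((k : ℝ) * (C * σ) ^ 2) * ∑ t : Fin k, 1 / ((t.1 : ℝ) + 1)
        ≤ (d : ℝ) * ((k : ℝ) * (C * σ) ^ 2) * (1 + Real.log k) := by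
          exact mul_le_mul_of_nonneg_left hharm (by positivity)
    _ = d * k * (C * σ) ^ 2 * (1 + Real.log k) := by ring
  · rw [hP]
    have e : ∑ t, (d : ℝ) * (d + 2) * ((v:ℝ) * S (Xstar k) t) ^ 2
        = (d : ℝ) * (d + 2) * (v:ℝ) ^ 2 * ∑ t : Fin k, (1 / ((t.1 : ℝ) + 1)) ^ 2 := by
      rw [Finset.mul_sum]
      exact Finset.sum_congr rfl fun t _ => by rw [hSstar t]; ring
    rw [e, hVcoe]
    calc (d : ℝ) * (d + 2) * ((k : ℝ) * (C * σ) ^ 2) ^ 2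
          * ∑ t : Fin k, (1 / ((t.1 : ℝ) + 1)) ^ 2
        ≤ (d : ℝ) * (d + 2) * ((k : ℝ) * (C * σ) ^ 2) ^ 2 * (Real.pi ^ 2 / 6) := by
          exact mul_le_mul_of_nonneg_left hbasel (by positivity)
    _ = d * (d + 2) * (k : ℝ) ^ 2 * (C * σ) ^ 4 * Real.pi ^ 2 / 6 := by ring
  · rw [hQ]
    have e : ∑ t, Real.sqrt ((d:ℝ) * (d + 2)) * ((v:ℝ) * S (Xstar k) t)
        = Real.sqrt ((d:ℝ) * (d + 2)) * (v:ℝ) * ∑ t : Fin k, 1 / ((t.1 : ℝ) + 1) := by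
      rw [Finset.mul_sum]
      exact Finset.sum_congr rfl fun t _ => by rw [hSstar t]; ring
    rw [e, hVcoe]
    calc Real.sqrt ((d:ℝ) * (d + 2)) * ((k : ℝ) * (C * σ) ^ 2)
          * ∑ t : Fin k, 1 / ((t.1 : ℝ) + 1)
        ≤ Real.sqrt ((d:ℝ) * (d + 2)) * ((k : ℝ) * (C * σ) ^ 2) * (1 + Real.log k) := by
          refine mul_le_mul_of_nonneg_left hharm ?_
          have := Real.sqrt_nonneg ((d:ℝ) * (d + 2))
          positivity
    _ = Real.sqrt ((d:ℝ) * (d + 2)) * k * (C * σ) ^ 2 * (1 + Real.log k) := by ring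
end

section
/- Let z be a random vector in ℝ^d whose coordinates are independent, each with a distribution symmetric about 0 and finite fourth moment. Let g ≥ 0 be a real number, v ∈ ℝ^d an arbitrary vector, and m > 0. Then E[(g + v^T z + (m/2)‖z‖₂²)²] ≥ g² + (m²/4)·E[‖z‖₂⁴]. -/
open MeasureTheory ProbabilityTheory

private lemma l2_mul_integrable {Ω : Type*} [MeasurableSpace Ω] {P : Measure Ω} {f gg : Ω → ℝ}
    (hf : MemLp f 2 P) (hg : MemLp gg 2 P) : Integrable (fun ω => f ω * gg ω) P := by
  rw [← memLp_one_iff_integrable]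
  have h := hf.smul hg (r := 1) (hpqr := ⟨by simp [ENNReal.inv_two_add_inv_two]⟩)
  simpa [Pi.smul_apply, smul_eq_mul, mul_comm, Pi.mul_def] using h

private lemma odd_moment_zero {Ω : Type*} [MeasurableSpace Ω] {P : Measure Ω} {x : Ω → ℝ}
    (hx : Measurable x) (hs : Measure.map x P = Measure.map (fun ω => -(x ω)) P)
    (f : ℝ → ℝ) (hf : Measurable f) (hodd : ∀ t, f (-t) = -f t) :
    ∫ ω, f (x ω) ∂P = 0 := by
  have h1 : ∫ ω, f (x ω) ∂P = ∫ t, f t ∂(P.map x) :=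
    (integral_map hx.aemeasurable hf.aestronglyMeasurable).symm
  have h2 : ∫ t, f t ∂(P.map (fun ω => -(x ω))) = ∫ ω, f (-(x ω)) ∂P :=
    integral_map hx.neg.aemeasurable hf.aestronglyMeasurable
  have h3 : ∫ ω, f (-(x ω)) ∂P = - ∫ ω, f (x ω) ∂P := by
    simp_rw [hodd]; exact integral_neg _
  rw [hs, h2, h3] at h1
  linarith

/-- Let `z` be a random vector in `ℝ^d` whose coordinates are independent,
each symmetric about `0` with finite fourth moment. For `g ≥ 0`, `v ∈ ℝ^d` and `m > 0`,
`E[(g + vᵀz + (m/2)‖z‖₂²)²] ≥ g² + (m²/4)·E[‖z‖₂⁴]`. -/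
theorem stmt_18 {Ω : Type*} [MeasurableSpace Ω] (P : Measure Ω) [IsProbabilityMeasure P]
    (d : ℕ) (z : Fin d → Ω → ℝ)
    (hmeas : ∀ i, Measurable (z i))
    (hindep : iIndepFun (m := fun _ : Fin d => (inferInstance : MeasurableSpace ℝ)) z P)
    (hsymm : ∀ i, Measure.map (z i) P = Measure.map (fun ω => -(z i ω)) P)
    (hL4 : ∀ i, MemLp (z i) 4 P)
    (g : ℝ) (hg : 0 ≤ g) (v : Fin d → ℝ) (m : ℝ) (hm : 0 < m) :
    g ^ 2 + m ^ 2 / 4 * (∫ ω, (∑ i, (z i ω) ^ 2) ^ 2 ∂P)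
      ≤ ∫ ω, (g + (∑ i, v i * z i ω) + m / 2 * ∑ i, (z i ω) ^ 2) ^ 2 ∂P := by
  set L : Ω → ℝ := fun ω => ∑ i, v i * z i ω with hLdef
  set S : Ω → ℝ := fun ω => ∑ i, (z i ω) ^ 2 with hSdef
  -- MemLp facts
  have hz2 : ∀ i, MemLp (z i) 2 P := fun i =>
    (hL4 i).mono_exponent (by norm_num)
  have hzsq2 : ∀ i, MemLp (fun ω => (z i ω) ^ 2) 2 P := by
    intro i
    have h := (hL4 i).smul (hL4 i) (r := 2)
      (hpqr := ⟨by
        rw [← two_mul, show (4:ENNReal) = 2*2 by norm_num, ENNReal.mul_inv (by simp) (by simp),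
          ← mul_assoc, ENNReal.mul_inv_cancel (by simp) (by simp), one_mul]⟩)
    simpa [Pi.smul_apply, smul_eq_mul, pow_two, Pi.mul_def] using h
  have hL2 : MemLp L 2 P :=
    memLp_finset_sum _ fun i _ => (hz2 i).const_mul (v i)
  have hS2 : MemLp S 2 P :=
    memLp_finset_sum _ fun i _ => hzsq2 i
  -- integrability facts
  have intL : Integrable L P := hL2.integrable one_le_two
  have intS : Integrable S P := hS2.integrable one_le_two
  have intL2 : Integrable (fun ω => L ω ^ 2) P := hL2.integrable_sq
  have intS2 : Integrable (fun ω => S ω ^ 2) P := hS2.integrable_sq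
  have intLS : Integrable (fun ω => L ω * S ω) P := l2_mul_integrable hL2 hS2
  have intzizj : ∀ i j : Fin d, Integrable (fun ω => z i ω * (z j ω) ^ 2) P :=
    fun i j => l2_mul_integrable (hz2 i) (hzsq2 j)
  -- first moments vanish
  have hz0 : ∀ i, ∫ ω, z i ω ∂P = 0 := fun i =>
    odd_moment_zero (hmeas i) (hsymm i) (fun t => t) measurable_id (fun t => rfl)
  have hz30 : ∀ i, ∫ ω, z i ω * (z i ω) ^ 2 ∂P = 0 := fun i =>
    odd_moment_zero (hmeas i) (hsymm i) (fun t => t * t ^ 2)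
      (by measurability) (fun t => by ring)
  have hcross : ∀ i j : Fin d, ∫ ω, z i ω * (z j ω) ^ 2 ∂P = 0 := by
    intro i j
    rcases eq_or_ne i j with rfl | hij
    · exact hz30 i
    · have hind : IndepFun (z i) (fun ω => (z j ω) ^ 2) P :=
        (hindep.indepFun hij).comp measurable_id (measurable_id.pow_const 2)
      have h := hind.integral_mul_eq_mul_integral ((hz2 i).integrable one_le_two).aestronglyMeasurable
        ((hzsq2 j).integrable one_le_two).aestronglyMeasurable
      simpa [Pi.mul_apply, hz0 i] using h
  have hintL0 : ∫ ω, L ω ∂P = 0 := by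
    rw [hLdef]
    rw [integral_finset_sum _ (fun i _ => ((hz2 i).integrable one_le_two).const_mul (v i))]
    simp only [integral_const_mul, hz0, mul_zero, Finset.sum_const_zero]
  have hintLS0 : ∫ ω, L ω * S ω ∂P = 0 := by
    have hfun : ∀ ω, L ω * S ω = ∑ i, ∑ j, v i * (z i ω * (z j ω) ^ 2) := by
      intro ω
      rw [hLdef, hSdef]
      rw [Finset.sum_mul_sum]
      exact Finset.sum_congr rfl fun i _ => Finset.sum_congr rfl fun j _ => by ring
    simp_rw [hfun]
    rw [integral_finset_sum _ (fun i _ => by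
      exact integrable_finset_sum _ (fun j _ => (intzizj i j).const_mul (v i)))]
    have : ∀ i : Fin d, ∫ ω, ∑ j, v i * (z i ω * (z j ω) ^ 2) ∂P = 0 := by
      intro i
      rw [integral_finset_sum _ (fun j _ => (intzizj i j).const_mul (v i))]
      simp only [integral_const_mul, hcross, mul_zero, Finset.sum_const_zero]
    simp [this]
  have hintS_nonneg : 0 ≤ ∫ ω, S ω ∂P :=
    integral_nonneg fun ω => Finset.sum_nonneg fun i _ => sq_nonneg _
  have hintL2_nonneg : 0 ≤ ∫ ω, L ω ^ 2 ∂P := integral_nonneg fun ω => sq_nonneg _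
  -- expand the square
  have hkey : ∫ ω, (g + L ω + m / 2 * S ω) ^ 2 ∂P
      = g ^ 2 + 2 * g * (∫ ω, L ω ∂P) + (2 * g * (m / 2)) * (∫ ω, S ω ∂P)
        + (∫ ω, L ω ^ 2 ∂P) + (2 * (m / 2)) * (∫ ω, L ω * S ω ∂P)
        + (m / 2) ^ 2 * (∫ ω, S ω ^ 2 ∂P) := by
    have hfun : (fun ω => (g + L ω + m / 2 * S ω) ^ 2)
        = fun ω => g ^ 2 + 2 * g * L ω + (2 * g * (m / 2)) * S ω
          + L ω ^ 2 + (2 * (m / 2)) * (L ω * S ω) + (m / 2) ^ 2 * S ω ^ 2 := by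
      funext ω; ring
    rw [hfun]
    have iA : Integrable (fun ω => g ^ 2 + 2 * g * L ω) P :=
      (integrable_const _).add (intL.const_mul _)
    have iB : Integrable (fun ω => g ^ 2 + 2 * g * L ω + (2 * g * (m / 2)) * S ω) P :=
      iA.add (intS.const_mul _)
    have iC : Integrable (fun ω => g ^ 2 + 2 * g * L ω + (2 * g * (m / 2)) * S ω
        + L ω ^ 2) P := iB.add intL2
    have iD : Integrable (fun ω => g ^ 2 + 2 * g * L ω + (2 * g * (m / 2)) * S ω
        + L ω ^ 2 + (2 * (m / 2)) * (L ω * S ω)) P := iC.add (intLS.const_mul _)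
    rw [integral_add iD (intS2.const_mul _), integral_add iC (intLS.const_mul _),
      integral_add iB intL2, integral_add iA (intS.const_mul _),
      integral_add (integrable_const _) (intL.const_mul _)]
    simp [integral_const_mul, measure_univ]
  calc g ^ 2 + m ^ 2 / 4 * (∫ ω, S ω ^ 2 ∂P)
      ≤ g ^ 2 + 2 * g * 0 + (2 * g * (m / 2)) * (∫ ω, S ω ∂P)
        + (∫ ω, L ω ^ 2 ∂P) + (2 * (m / 2)) * 0 + (m / 2) ^ 2 * (∫ ω, S ω ^ 2 ∂P) := by
        nlinarith [mul_nonneg (mul_nonneg (by linarith : (0:ℝ) ≤ 2 * g) (by linarith : (0:ℝ) ≤ m / 2)) hintS_nonneg]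
    _ = ∫ ω, (g + L ω + m / 2 * S ω) ^ 2 ∂P := by rw [hkey, hintL0, hintLS0]
end

section
/- Let s > 0 and K ≥ s, and let X be a real random variable distributed as a centered Gaussian of variance s² conditioned on the event |X| ≤ K (a symmetric truncated normal). Then Var[X] ≥ 0.02 · s². -/
open MeasureTheory ProbabilityTheory

/-- For `s > 0` and `K ≥ s`, a centered Gaussian of variance `s²` conditioned
on `|X| ≤ K` (a symmetric truncated normal) has variance at least `0.02 s²`. -/
theorem stmt_19 (s K : ℝ) (hs : 0 < s) (hK : s ≤ K) :
    0.02 * s ^ 2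
      ≤ variance (fun x : ℝ => x)
          ((gaussianReal 0 ((s ^ 2).toNNReal))[|{x : ℝ | |x| ≤ K}]) := by
  set v : NNReal := (s ^ 2).toNNReal with hv_def
  have hvv : (v : ℝ) = s ^ 2 := Real.coe_toNNReal _ (sq_nonneg s)
  have hv : v ≠ 0 := by
    intro h
    have := hvv
    rw [h] at this
    simp at this
    nlinarith
  set μ : Measure ℝ := gaussianReal 0 v with hμ_def
  set S : Set ℝ := {x : ℝ | |x| ≤ K} with hS_def
  have hSmeas : MeasurableSet S := measurableSet_le (measurable_abs) (measurable_const)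
  have hK0 : 0 < K := lt_of_lt_of_le hs hK
  -- S has nonzero Gaussian measure
  have hSne : μ S ≠ 0 := by
    intro h
    have hvol : volume S = 0 := (gaussianReal_absolutelyContinuous' 0 hv) h
    have : Set.Icc (-K) K ⊆ S := by
      intro x hx
      simp only [hS_def, Set.mem_setOf_eq, abs_le]
      exact ⟨hx.1, hx.2⟩
    have h2 : volume (Set.Icc (-K) K) = 0 := measure_mono_null this hvol
    rw [Real.volume_Icc] at h2
    simp only [ENNReal.ofReal_eq_zero] at h2
    linarith
  haveI : IsProbabilityMeasure (μ[|S]) := cond_isProbabilityMeasure hSne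
  -- symmetry: map of neg
  have hmapμ : Measure.map (fun x : ℝ => -x) μ = μ := by
    have h := gaussianReal_map_const_mul (μ := 0) (v := v) (-1)
    have h1 : (-1:ℝ) * 0 = 0 := by ring
    have h2 : (NNReal.mk ((-1:ℝ)^2) (sq_nonneg _)) = 1 := by ext; norm_num
    rw [h1, h2, one_mul] at h
    have h3 : (fun x : ℝ => -x) = (fun x : ℝ => (-1) * x) := by funext x; ring
    rw [h3]
    exact h
  have hnegS : (fun x : ℝ => -x) ⁻¹' S = S := by
    ext x; simp [hS_def]
  have hmap : Measure.map (fun x : ℝ => -x) (μ[|S]) = μ[|S] := by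
    rw [ProbabilityTheory.cond, Measure.map_smul]
    congr 1
    calc Measure.map (fun x : ℝ => -x) (μ.restrict S)
        = Measure.map (fun x : ℝ => -x) (μ.restrict ((fun x : ℝ => -x) ⁻¹' S)) := by
          rw [hnegS]
      _ = (Measure.map (fun x : ℝ => -x) μ).restrict S :=
          (Measure.restrict_map measurable_neg hSmeas).symm
      _ = μ.restrict S := by rw [hmapμ]
  set μc := μ[|S] with hμc_def
  -- mean is zero by symmetry
  have hmean : ∫ x, x ∂μc = 0 := by
    have h1 : ∫ x, x ∂μc = ∫ x, -x ∂μc := by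
      conv_lhs => rw [← hmap]
      exact integral_map (φ := fun x : ℝ => -x) (f := fun x : ℝ => x)
        measurable_neg.aemeasurable measurable_id.aestronglyMeasurable
    rw [integral_neg] at h1
    linarith
  have hae : ∀ᵐ x ∂μc, x ∈ S := by
    rw [hμc_def, ProbabilityTheory.cond]
    exact Measure.ae_smul_measure (ae_restrict_mem hSmeas) _
  have hmem : MemLp (fun x : ℝ => x) 2 μc :=
    MemLp.of_bound aestronglyMeasurable_id K
      (hae.mono fun x hx => by simpa [Real.norm_eq_abs, hS_def] using hx)
  have hvar : variance (fun x : ℝ => x) μc = ∫ x, x ^ 2 ∂μc := by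
    rw [variance_eq_sub hmem]
    simp only [Pi.pow_apply, hmean]
    norm_num
  set A : Set ℝ := Set.Icc (s/2) s with hA_def
  have hAS : A ⊆ S := by
    intro x hx
    simp only [hS_def, Set.mem_setOf_eq, abs_le]
    constructor
    · nlinarith [hx.1]
    · linarith [hx.2]
  have hAmeas : MeasurableSet A := measurableSet_Icc
  have hint : Integrable (fun x : ℝ => x ^ 2) μc := hmem.integrable_sq
  have h1 : ∫ x in A, x ^ 2 ∂μc ≤ ∫ x, x ^ 2 ∂μc :=
    setIntegral_le_integral hint (Filter.Eventually.of_forall fun x => sq_nonneg x)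
  have h2 : (s / 2) ^ 2 * (μc A).toReal ≤ ∫ x in A, x ^ 2 ∂μc := by
    have hc : ∫ x in A, (s / 2) ^ 2 ∂μc ≤ ∫ x in A, x ^ 2 ∂μc := by
      refine setIntegral_mono_on ?_ hint.integrableOn hAmeas ?_
      · exact integrableOn_const (measure_ne_top _ _)
      · intro x hx
        nlinarith [hx.1, hx.2, hs]
    rwa [setIntegral_const, smul_eq_mul, mul_comm] at hc
  -- lower bound on the Gaussian measure of A
  have hgA : ENNReal.ofReal 0.11 ≤ μ A := by
    have hpt : ∀ x ∈ A, ENNReal.ofReal (0.22 / s) ≤ gaussianPDF 0 v x := by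
      intro x hx
      refine ENNReal.ofReal_le_ofReal ?_
      unfold gaussianPDFReal
      have hx1 : s / 2 ≤ x := hx.1
      have hx2 : x ≤ s := hx.2
      have hxpos : 0 < x := by linarith
      have hsqrt : Real.sqrt (2 * Real.pi * (v : ℝ)) ≤ 2.51 * s := by
        rw [hvv]
        have h6 : 2 * Real.pi * s ^ 2 ≤ (2.51 * s) ^ 2 := by
          nlinarith [Real.pi_lt_d2, sq_nonneg s]
        calc Real.sqrt (2 * Real.pi * s ^ 2) ≤ Real.sqrt ((2.51 * s) ^ 2) :=
              Real.sqrt_le_sqrt h6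
          _ = 2.51 * s := Real.sqrt_sq (by positivity)
      have hsqrtpos : 0 < Real.sqrt (2 * Real.pi * (v : ℝ)) := by
        apply Real.sqrt_pos.2
        rw [hvv]
        positivity
      have hexp : (0.6 : ℝ) ≤ Real.exp (-(x - 0) ^ 2 / (2 * (v : ℝ))) := by
        have he1 : Real.exp (-(1/2) : ℝ) ≤ Real.exp (-(x - 0) ^ 2 / (2 * (v : ℝ))) := by
          apply Real.exp_le_exp.2
          rw [hvv]
          have h2s : (0:ℝ) < 2 * s ^ 2 := by positivity
          have hle : (x - 0) ^ 2 / (2 * s ^ 2) ≤ 1 / 2 := by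
            rw [div_le_iff₀ h2s]
            nlinarith
          rw [neg_div]
          linarith
        have he2 : (0.6 : ℝ) ≤ Real.exp (-(1/2) : ℝ) := by
          have hsq : Real.exp 1 = Real.exp (1/2 : ℝ) ^ 2 := by
            rw [← Real.exp_nat_mul]
            norm_num
          have hle : Real.exp (1/2 : ℝ) ≤ 5/3 := by
            nlinarith [Real.exp_pos (1/2 : ℝ), Real.exp_one_lt_d9]
          rw [Real.exp_neg]
          rw [le_inv_comm₀ (by norm_num) (Real.exp_pos _)]
          linarith
        linarith
      have hinv : (2.51 * s)⁻¹ ≤ (Real.sqrt (2 * Real.pi * (v : ℝ)))⁻¹ :=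
        inv_anti₀ hsqrtpos hsqrt
      calc (0.22 : ℝ) / s ≤ (2.51 * s)⁻¹ * 0.6 := by
            have heq : (2.51 * s)⁻¹ * 0.6 = 0.6 / (2.51 * s) := by ring
            rw [heq, div_le_div_iff₀ hs (by positivity)]
            nlinarith
        _ ≤ (Real.sqrt (2 * Real.pi * (v : ℝ)))⁻¹ *
              Real.exp (-(x - 0) ^ 2 / (2 * (v : ℝ))) := by
            apply mul_le_mul hinv hexp (by norm_num) (le_of_lt (inv_pos.2 hsqrtpos))
    have hvol : volume A = ENNReal.ofReal (s / 2) := by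
      rw [hA_def, Real.volume_Icc]
      congr 1
      ring
    calc ENNReal.ofReal 0.11 = ENNReal.ofReal (0.22 / s) * ENNReal.ofReal (s / 2) := by
          rw [← ENNReal.ofReal_mul (by positivity)]
          congr 1
          field_simp
          ring
      _ = ∫⁻ _ in A, ENNReal.ofReal (0.22 / s) ∂volume := by
          rw [setLIntegral_const, hvol]
      _ ≤ ∫⁻ x in A, gaussianPDF 0 v x ∂volume :=
          setLIntegral_mono (measurable_gaussianPDF 0 v) hpt
      _ = μ A := (gaussianReal_apply 0 hv A).symm
  have hμcA : ENNReal.ofReal 0.11 ≤ μc A := by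
    refine le_trans hgA ?_
    rw [hμc_def, cond_apply hSmeas, Set.inter_eq_self_of_subset_right hAS]
    calc μ A = 1 * μ A := (one_mul _).symm
      _ ≤ (μ S)⁻¹ * μ A := by
          gcongr
          exact ENNReal.one_le_inv.2 prob_le_one
  have htoReal : (0.11 : ℝ) ≤ (μc A).toReal := by
    have := ENNReal.toReal_mono (measure_ne_top μc A) hμcA
    rwa [ENNReal.toReal_ofReal (by norm_num)] at this
  have hfinal : (0.02 : ℝ) * s ^ 2 ≤ (s / 2) ^ 2 * (μc A).toReal := by
    nlinarith [sq_nonneg s]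
  calc (0.02 : ℝ) * s ^ 2 ≤ (s / 2) ^ 2 * (μc A).toReal := hfinal
    _ ≤ ∫ x in A, x ^ 2 ∂μc := h2
    _ ≤ ∫ x, x ^ 2 ∂μc := h1
    _ = variance (fun x : ℝ => x) μc := hvar.symm
end
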